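/- Let P be a polyhedron in ℝⁿ, G a nonempty face of P, and q ∈ (G*)°|P. Then there exists r > 0, depending only on q, P and G, such that for every x ∈ P \ G and every m ∈ G, the orthogonal projection w of x − m onto V(G)^⊥ is nonzero and satisfies ⟨q, w⟩ ≥ r·‖w‖. -/

import Mathlib

open scoped RealInnerProductSpace

noncomputable section

/-- A polyhedron in `ℝⁿ` is a finite intersection of closed half-spaces. -/
def IsPolyhedron {n : ℕ} (P : Set (EuclideanSpace ℝ (Fin n))) : Prop :=
  ∃ (N : ℕ) (q : Fin N → EuclideanSpace ℝ (Fin n)) (r : Fin N → ℝ),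
    P = {y | ∀ j, r j ≤ ⟪q j, y⟫}

/-- A subset `F ⊆ P` is a face of `P` if there are `q ∈ ℝⁿ` and `ρ ∈ ℝ` with
`⟨q, u⟩ = ρ` for every `u ∈ F` and `ρ < ⟨q, y⟩` for every `y ∈ P \ F`. -/
def IsFace {n : ℕ} (P F : Set (EuclideanSpace ℝ (Fin n))) : Prop :=
  F ⊆ P ∧ ∃ (q : EuclideanSpace ℝ (Fin n)) (ρ : ℝ),
    (∀ u ∈ F, ⟪q, u⟫ = ρ) ∧ ∀ y ∈ P \ F, ρ < ⟪q, y⟫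

/-- The interior `(F*)°|P` of the cone of a face `F` of `P`. -/
def coneInterior {n : ℕ} (P F : Set (EuclideanSpace ℝ (Fin n))) :
    Set (EuclideanSpace ℝ (Fin n)) :=
  {q | q ≠ 0 ∧ ∃ ρ : ℝ, (∀ u ∈ F, ⟪q, u⟫ = ρ) ∧ ∀ y ∈ P \ F, ρ < ⟪q, y⟫}

/-- The direction space `V(A) = span {x - y : x, y ∈ A}` of a set `A ⊆ ℝⁿ`. -/
def dirSpan {n : ℕ} (A : Set (EuclideanSpace ℝ (Fin n))) :
    Submodule ℝ (EuclideanSpace ℝ (Fin n)) :=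
  Submodule.span ℝ {v | ∃ x ∈ A, ∃ y ∈ A, v = x - y}

private lemma inner_dirSpan_eq_zero {n : ℕ} {G : Set (EuclideanSpace ℝ (Fin n))}
    {u : EuclideanSpace ℝ (Fin n)} (h : ∀ x ∈ G, ∀ y ∈ G, ⟪u, x - y⟫ = (0:ℝ)) :
    ∀ v ∈ dirSpan G, ⟪u, v⟫ = (0:ℝ) := by
  intro v hv
  induction hv using Submodule.span_induction with
  | mem x hx => obtain ⟨a, ha, b, hb, rfl⟩ := hx; exact h a ha b hb
  | zero => simp
  | add x y _ _ hx hy => rw [inner_add_right, hx, hy]; ring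
  | smul a x _ hx => rw [real_inner_smul_right, hx]; ring

theorem stmt13 {n : ℕ} (P G : Set (EuclideanSpace ℝ (Fin n)))
    (hP : IsPolyhedron P) (hG : IsFace P G) (hGne : G.Nonempty)
    (q : EuclideanSpace ℝ (Fin n)) (hq : q ∈ coneInterior P G) :
    ∃ r : ℝ, 0 < r ∧ ∀ x ∈ P \ G, ∀ m ∈ G,
      ((Submodule.orthogonalProjectionOnto (dirSpan G)ᗮ (x - m) : EuclideanSpace ℝ (Fin n)) ≠ 0 ∧
        r * ‖(Submodule.orthogonalProjectionOnto (dirSpan G)ᗮ (x - m) : EuclideanSpace ℝ (Fin n))‖ ≤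
          ⟪q, (Submodule.orthogonalProjectionOnto (dirSpan G)ᗮ (x - m) : EuclideanSpace ℝ (Fin n))⟫) := by
  classical
  obtain ⟨N, Q, R, hPeq⟩ := hP
  obtain ⟨hGP, qF, ρF, hqF, hqF'⟩ := hG
  obtain ⟨hq0, ρ, hρ, hρ'⟩ := hq
  obtain ⟨g₀, hg₀⟩ := hGne
  have hmemP : ∀ y : EuclideanSpace ℝ (Fin n), y ∈ P ↔ ∀ j, R j ≤ ⟪Q j, y⟫ := by
    intro y; rw [hPeq]; exact Iff.rfl
  -- Convexity of G
  have hGconv : Convex ℝ G := by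
    intro u hu v hv a b ha hb hab
    have hPm : a • u + b • v ∈ P := by
      rw [hmemP]; intro j
      have h1 := (hmemP u).1 (hGP hu) j
      have h2 := (hmemP v).1 (hGP hv) j
      rw [inner_add_right, real_inner_smul_right, real_inner_smul_right]
      have hR : a * R j + b * R j = R j := by rw [← add_mul, hab, one_mul]
      linarith [mul_le_mul_of_nonneg_left h1 ha, mul_le_mul_of_nonneg_left h2 hb]
    by_contra hnG
    have hlt := hqF' _ ⟨hPm, hnG⟩
    rw [inner_add_right, real_inner_smul_right, real_inner_smul_right,
      hqF u hu, hqF v hv] at hlt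
    have hx : a * ρF + b * ρF = ρF := by rw [← add_mul, hab, one_mul]
    linarith
  -- a point m₀ in the relative interior of G (centroid of witnesses)
  set gsel : Fin N → EuclideanSpace ℝ (Fin n) :=
    fun j => if h : ∃ g ∈ G, R j < ⟪Q j, g⟫ then h.choose else g₀ with hgsel_def
  have hgselG : ∀ j, gsel j ∈ G := by
    intro j
    by_cases h : ∃ g ∈ G, R j < ⟪Q j, g⟫
    · simp only [hgsel_def, dif_pos h]; exact h.choose_spec.1
    · simp only [hgsel_def, dif_neg h]; exact hg₀
  have hgsel2 : ∀ j, (∃ g ∈ G, R j < ⟪Q j, g⟫) → R j < ⟪Q j, gsel j⟫ := by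
    intro j h
    simp only [hgsel_def, dif_pos h]; exact h.choose_spec.2
  set f : Fin (N+1) → EuclideanSpace ℝ (Fin n) := Fin.cons g₀ gsel with hf_def
  have hfG : ∀ i, f i ∈ G := by
    intro i
    refine Fin.cases ?_ ?_ i
    · simpa [hf_def] using hg₀
    · intro i; simpa [hf_def] using hgselG i
  set m₀ : EuclideanSpace ℝ (Fin n) :=
    ∑ i : Fin (N+1), ((N:ℝ)+1)⁻¹ • f i with hm₀_def
  have hm₀G : m₀ ∈ G := by
    refine hGconv.sum_mem (fun i _ => by positivity) ?_ (fun i _ => hfG i)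
    rw [Finset.sum_const, Finset.card_univ, Fintype.card_fin, nsmul_eq_mul]
    push_cast
    field_simp
  have hm₀P : m₀ ∈ P := hGP hm₀G
  have hinner_m₀ : ∀ u : EuclideanSpace ℝ (Fin n),
      ⟪u, m₀⟫ = ∑ i : Fin (N+1), ((N:ℝ)+1)⁻¹ * ⟪u, f i⟫ := by
    intro u
    rw [hm₀_def, inner_sum]
    exact Finset.sum_congr rfl fun i _ => real_inner_smul_right _ _ _
  have hm₀lt : ∀ j, (∃ g ∈ G, R j < ⟪Q j, g⟫) → R j < ⟪Q j, m₀⟫ := by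
    intro j hj
    have hsum : R j = ∑ _i : Fin (N+1), ((N:ℝ)+1)⁻¹ * R j := by
      rw [Finset.sum_const, Finset.card_univ, Fintype.card_fin, nsmul_eq_mul]
      push_cast
      field_simp
    have key : ∑ _i : Fin (N+1), ((N:ℝ)+1)⁻¹ * R j
        < ∑ i : Fin (N+1), ((N:ℝ)+1)⁻¹ * ⟪Q j, f i⟫ := by
      refine Finset.sum_lt_sum (fun i _ => ?_) ⟨j.succ, Finset.mem_univ _, ?_⟩
      · have h1 := (hmemP (f i)).1 (hGP (hfG i)) j
        have hc : (0:ℝ) ≤ ((N:ℝ)+1)⁻¹ := by positivity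
        nlinarith
      · have hfj : f j.succ = gsel j := by simp [hf_def]
        rw [hfj]
        have h1 := hgsel2 j hj
        have hc : (0:ℝ) < ((N:ℝ)+1)⁻¹ := by positivity
        nlinarith
    calc R j = ∑ _i : Fin (N+1), ((N:ℝ)+1)⁻¹ * R j := hsum
      _ < ∑ i : Fin (N+1), ((N:ℝ)+1)⁻¹ * ⟪Q j, f i⟫ := key
      _ = ⟪Q j, m₀⟫ := (hinner_m₀ (Q j)).symm
  -- constraints active at m₀ are constant on G, hence vanish on V(G)
  have hact_const : ∀ j, ⟪Q j, m₀⟫ = R j → ∀ g ∈ G, ⟪Q j, g⟫ = R j := by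
    intro j hj g hg
    have hle : ⟪Q j, g⟫ ≤ R j := by
      by_contra h
      exact (ne_of_gt (hm₀lt j ⟨g, hg, lt_of_not_ge h⟩)) hj
    exact le_antisymm hle ((hmemP g).1 (hGP hg) j)
  have hactV : ∀ j, ⟪Q j, m₀⟫ = R j → ∀ v ∈ dirSpan G, ⟪Q j, v⟫ = 0 := by
    intro j hj
    refine inner_dirSpan_eq_zero (fun x hx y hy => ?_)
    rw [inner_sub_right, hact_const j hj x hx, hact_const j hj y hy]; ring
  have hqV : ∀ v ∈ dirSpan G, ⟪q, v⟫ = 0 := by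
    refine inner_dirSpan_eq_zero (fun x hx y hy => ?_)
    rw [inner_sub_right, hρ x hx, hρ y hy]; ring
  -- the polyhedral cone containing all projections
  set Kset : Set (EuclideanSpace ℝ (Fin n)) :=
    {w | w ∈ (dirSpan G)ᗮ ∧ ∀ j, ⟪Q j, m₀⟫ = R j → 0 ≤ ⟪Q j, w⟫} with hKset_def
  have hqm₀ : ⟪q, m₀⟫ = ρ := hρ m₀ hm₀G
  -- positivity of ⟪q,·⟫ on Kset \ {0}
  have hpos : ∀ w ∈ Kset, w ≠ 0 → 0 < ⟪q, w⟫ := by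
    intro w hw hw0
    by_contra hle
    push_neg at hle
    have hev : ∀ᶠ ε in nhdsWithin (0:ℝ) (Set.Ioi 0),
        ∀ j, R j ≤ ⟪Q j, m₀⟫ + ε * ⟪Q j, w⟫ := by
      rw [Filter.eventually_all]
      intro j
      by_cases hj : ⟪Q j, m₀⟫ = R j
      · filter_upwards [self_mem_nhdsWithin] with ε hε
        have h1 := hw.2 j hj
        have h2 : (0:ℝ) < ε := hε
        nlinarith
      · have hlt : R j < ⟪Q j, m₀⟫ := lt_of_le_of_ne ((hmemP m₀).1 hm₀P j) (Ne.symm hj)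
        have hcont : Continuous fun ε : ℝ => ⟪Q j, m₀⟫ + ε * ⟪Q j, w⟫ :=
          continuous_const.add (continuous_id.mul continuous_const)
        have hopen : IsOpen {ε : ℝ | R j < ⟪Q j, m₀⟫ + ε * ⟪Q j, w⟫} :=
          isOpen_lt continuous_const hcont
        have h0 : (0:ℝ) ∈ {ε : ℝ | R j < ⟪Q j, m₀⟫ + ε * ⟪Q j, w⟫} := by
          simpa using hlt
        filter_upwards [nhdsWithin_le_nhds (hopen.mem_nhds h0)] with ε hε
        exact le_of_lt hε
    obtain ⟨ε, hεj, hε0⟩ := (hev.and self_mem_nhdsWithin).exists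
    have hε0' : (0:ℝ) < ε := hε0
    have hyP : m₀ + ε • w ∈ P := by
      rw [hmemP]; intro j
      have h1 := hεj j
      rwa [inner_add_right, real_inner_smul_right]
    have hqy : ⟪q, m₀ + ε • w⟫ = ρ + ε * ⟪q, w⟫ := by
      rw [inner_add_right, real_inner_smul_right, hqm₀]
    have hyG : m₀ + ε • w ∈ G := by
      by_contra hnG
      have h1 := hρ' _ ⟨hyP, hnG⟩
      rw [hqy] at h1
      nlinarith
    have hmemdir : ε • w ∈ dirSpan G := by
      apply Submodule.subset_span
      exact ⟨m₀ + ε • w, hyG, m₀, hm₀G, by abel⟩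
    have hinner0 : ⟪ε • w, w⟫ = (0:ℝ) :=
      (Submodule.mem_orthogonal _ w).1 hw.1 (ε • w) hmemdir
    rw [real_inner_smul_left] at hinner0
    have hww : ⟪w, w⟫ = (0:ℝ) := by
      rcases mul_eq_zero.1 hinner0 with h | h
      · exact absurd h hε0'.ne'
      · exact h
    exact hw0 (inner_self_eq_zero.1 hww)
  -- Kset is a closed cone
  have hKclosed : IsClosed Kset := by
    have heq : Kset = (↑(dirSpan G)ᗮ : Set (EuclideanSpace ℝ (Fin n))) ∩
        ⋂ j : Fin N, {w | ⟪Q j, m₀⟫ = R j → 0 ≤ ⟪Q j, w⟫} := by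
      ext w
      simp only [hKset_def, Set.mem_inter_iff, Set.mem_iInter, Set.mem_setOf_eq,
        SetLike.mem_coe]
    rw [heq]
    refine IsClosed.inter (Submodule.closed_of_finiteDimensional _)
      (isClosed_iInter fun j => ?_)
    by_cases hj : ⟪Q j, m₀⟫ = R j
    · have : {w : EuclideanSpace ℝ (Fin n) | ⟪Q j, m₀⟫ = R j → 0 ≤ ⟪Q j, w⟫}
          = {w | 0 ≤ ⟪Q j, w⟫} := by
        ext w; exact ⟨fun h => h hj, fun h _ => h⟩
      rw [this]
      exact isClosed_le continuous_const (continuous_const.inner continuous_id)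
    · have : {w : EuclideanSpace ℝ (Fin n) | ⟪Q j, m₀⟫ = R j → 0 ≤ ⟪Q j, w⟫}
          = Set.univ := by
        ext w
        simp only [Set.mem_setOf_eq, Set.mem_univ, iff_true]
        exact fun h => absurd h hj
      rw [this]
      exact isClosed_univ
  have hKcone : ∀ w ∈ Kset, ∀ c : ℝ, 0 ≤ c → c • w ∈ Kset := by
    intro w hw c hc
    refine ⟨Submodule.smul_mem _ c hw.1, fun j hj => ?_⟩
    rw [real_inner_smul_right]
    exact mul_nonneg hc (hw.2 j hj)
  -- extract r by compactness
  obtain ⟨r, hr0, hrK⟩ : ∃ r : ℝ, 0 < r ∧ ∀ w ∈ Kset, r * ‖w‖ ≤ ⟪q, w⟫ := by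
    by_cases hS : (Kset ∩ Metric.sphere 0 1).Nonempty
    · have hcomp : IsCompact (Kset ∩ Metric.sphere 0 1) := by
        apply Metric.isCompact_of_isClosed_isBounded
          (hKclosed.inter Metric.isClosed_sphere)
        exact (Metric.isBounded_sphere).subset Set.inter_subset_right
      obtain ⟨w₀, hw₀, hmin⟩ := hcomp.exists_isMinOn hS
        (((continuous_const.inner continuous_id).continuousOn) :
          ContinuousOn (fun w : EuclideanSpace ℝ (Fin n) => ⟪q, w⟫) _)
      have hw₀0 : w₀ ≠ 0 := by
        intro h
        have h1 := hw₀.2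
        rw [h] at h1
        simp [mem_sphere_zero_iff_norm] at h1
      refine ⟨⟪q, w₀⟫, hpos w₀ hw₀.1 hw₀0, ?_⟩
      intro w hw
      rcases eq_or_ne w 0 with rfl | hw0
      · simp
      · have hn : (0:ℝ) < ‖w‖ := norm_pos_iff.2 hw0
        have hmem : ‖w‖⁻¹ • w ∈ Kset ∩ Metric.sphere 0 1 := by
          refine ⟨hKcone w hw _ (by positivity), ?_⟩
          rw [mem_sphere_zero_iff_norm, norm_smul, norm_inv, norm_norm,
            inv_mul_cancel₀ hn.ne']
        have h1 := (isMinOn_iff.mp hmin) _ hmem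
        simp only [id] at h1
        rw [real_inner_smul_right] at h1
        calc ⟪q, w₀⟫ * ‖w‖ ≤ (‖w‖⁻¹ * ⟪q, w⟫) * ‖w‖ := by nlinarith
          _ = ⟪q, w⟫ := by field_simp
    · refine ⟨1, one_pos, fun w hw => ?_⟩
      rcases eq_or_ne w 0 with rfl | hw0
      · simp
      · exfalso
        apply hS
        have hn : (0:ℝ) < ‖w‖ := norm_pos_iff.2 hw0
        exact ⟨‖w‖⁻¹ • w, hKcone w hw _ (by positivity), by
          rw [mem_sphere_zero_iff_norm, norm_smul, norm_inv, norm_norm,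
            inv_mul_cancel₀ hn.ne']⟩
  -- conclusion
  refine ⟨r, hr0, ?_⟩
  intro x hx m hm
  set v : EuclideanSpace ℝ (Fin n) := x - m with hv
  set w : EuclideanSpace ℝ (Fin n) := ↑(Submodule.orthogonalProjectionOnto (dirSpan G)ᗮ v) with hw_def
  have hvw : v - w ∈ dirSpan G := by
    have heq : v - w = ↑(Submodule.orthogonalProjectionOnto (dirSpan G) v) := by
      rw [hw_def, ← Submodule.starProjection_apply, Submodule.starProjection_orthogonal_val,
        Submodule.starProjection_apply]; abel
    rw [heq]
    exact SetLike.coe_mem _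
  have hwW : w ∈ (dirSpan G)ᗮ := SetLike.coe_mem _
  have hqw : ⟪q, w⟫ = ⟪q, v⟫ := by
    have h0 : ⟪q, v - w⟫ = 0 := hqV _ hvw
    rw [inner_sub_right] at h0
    linarith
  have hqv : 0 < ⟪q, v⟫ := by
    have h1 := hρ' x hx
    have h2 := hρ m hm
    rw [hv, inner_sub_right]
    linarith
  have hw0 : w ≠ 0 := by
    intro h
    rw [h, inner_zero_right] at hqw
    linarith
  have hwK : w ∈ Kset := by
    refine ⟨hwW, fun j hj => ?_⟩
    have h0 : ⟪Q j, v - w⟫ = 0 := hactV j hj _ hvw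
    have h1 : ⟪Q j, m⟫ = R j := hact_const j hj m hm
    have h2 : R j ≤ ⟪Q j, x⟫ := (hmemP x).1 hx.1 j
    rw [inner_sub_right] at h0
    have h3 : ⟪Q j, v⟫ = ⟪Q j, x⟫ - R j := by rw [hv, inner_sub_right, h1]
    linarith
  exact ⟨hw0, hrK w hwK⟩
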